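/- For k ≥ 1: A_{k+1,1}^0 = (k+1)(2 A_{k,0}^0 − A_{k,0}^1) and A_{k+1,1}^r = (k+1)(A_{k,0}^r − A_{k,0}^{r+1}) for all r ≥ 1. -/

import Mathlib

/-- Binomial coefficient `C(n,r)` for integer arguments: zero if `r < 0` or
`0 ≤ n < r`, the usual binomial for `0 ≤ r ≤ n`, and the generalized binomial
for negative upper index. -/
def C (n r : ℤ) : ℤ :=
  if r < 0 then 0
  else if 0 ≤ n then (n.toNat.choose r.toNat : ℤ)
  else (-1) ^ r.toNat * ((r - n - 1).toNat.choose r.toNat : ℤ)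

def A (k l r : ℤ) : ℤ :=
  C (l + r - 1) (r - 1) * C (2 * k - l - 1) (k - l - r - 1) + C (l + r) r * C (2 * k - l - 1) (k - l - r)

lemma C_neg {n r : ℤ} (h : r < 0) : C n r = 0 := if_pos h

lemma C_eq {n r : ℤ} (hn : 0 ≤ n) (hr : 0 ≤ r) :
    C n r = (n.toNat.choose r.toNat : ℤ) := by
  unfold C; rw [if_neg (not_lt.2 hr), if_pos hn]

lemma C_zero {n : ℤ} (hn : 0 ≤ n) : C n 0 = 1 := by
  rw [C_eq hn le_rfl]; simp

lemma C_self {n : ℤ} (hn : 0 ≤ n) : C n n = 1 := by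
  rw [C_eq hn hn]; simp

lemma C_one {n : ℤ} (hn : 0 ≤ n) : C n 1 = n := by
  rw [C_eq hn (by norm_num)]
  simp [Nat.choose_one_right, Int.toNat_of_nonneg hn]

lemma C_symm {n : ℤ} (hn : 0 ≤ n) (r : ℤ) : C n r = C n (n - r) := by
  rcases lt_or_ge r 0 with h | h
  · rw [C_neg h, C_eq hn (by omega)]
    rw [Nat.choose_eq_zero_of_lt (by omega)]
    norm_num
  rcases lt_or_ge n r with h2 | h2
  · rw [C_neg (show n - r < 0 by omega), C_eq hn h]
    rw [Nat.choose_eq_zero_of_lt (by omega)]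
    norm_num
  · rw [C_eq hn h, C_eq hn (by omega)]
    have : (n - r).toNat = n.toNat - r.toNat := by omega
    rw [this, Nat.choose_symm (by omega)]

lemma C_pascal {n : ℤ} (hn : 1 ≤ n) (r : ℤ) :
    C n r = C (n - 1) r + C (n - 1) (r - 1) := by
  rcases lt_or_ge r 0 with h | h
  · rw [C_neg h, C_neg h, C_neg (by omega)]; ring
  rcases eq_or_lt_of_le h with h0 | h1
  · rw [← h0, C_zero (by omega), C_zero (by omega), C_neg (by omega)]; ring
  · rw [C_eq (by omega) h, C_eq (by omega) h, C_eq (by omega) (by omega)]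
    have h1' : 1 ≤ r := h1
    have e1 : n.toNat = (n - 1).toNat + 1 := by omega
    have e2 : r.toNat = (r - 1).toNat + 1 := by omega
    rw [e1, e2, Nat.choose_succ_succ]
    push_cast
    ring

lemma C_mul {n : ℤ} (hn : 0 ≤ n) (r : ℤ) :
    r * C n r = n * C (n - 1) (r - 1) := by
  rcases lt_or_ge r 0 with h | h
  · rw [C_neg h, C_neg (show r - 1 < 0 by omega)]; ring
  rcases eq_or_lt_of_le h with h0 | h1
  · rw [← h0, C_neg (show (0:ℤ) - 1 < 0 by norm_num)]; ring
  rcases eq_or_lt_of_le hn with hn0 | hn1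
  · rw [C_eq (by omega) h, ← hn0]
    rw [Nat.choose_eq_zero_of_lt (by omega)]
    norm_num
  · rw [C_eq hn h, C_eq (by omega) (by omega)]
    have e1 : n.toNat = (n - 1).toNat + 1 := by omega
    have key := Nat.add_one_mul_choose_eq (n - 1).toNat ((r - 1).toNat)
    have e2 : (r - 1).toNat + 1 = r.toNat := by omega
    rw [e2] at key
    rw [e1]
    have key2 : ((((n - 1).toNat + 1 : ℕ)) : ℤ) * ((n - 1).toNat.choose (r - 1).toNat : ℤ)
        = ((((n - 1).toNat + 1).choose r.toNat : ℕ) : ℤ) * ((r.toNat : ℕ) : ℤ) := by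
      exact_mod_cast key
    have cn : ((((n - 1).toNat + 1 : ℕ)) : ℤ) = n := by omega
    have cr : ((r.toNat : ℕ) : ℤ) = r := by omega
    rw [cn, cr] at key2
    linear_combination -key2

lemma C_absorb {n : ℤ} (hn : 1 ≤ n) (r : ℤ) :
    (n - r) * C n r = n * C (n - 1) r := by
  have hp := C_pascal hn r
  have hm := C_mul (by omega : (0:ℤ) ≤ n) r
  linear_combination n * hp - hm

lemma C_succ_absorb {n : ℤ} (hn : 1 ≤ n) (r : ℤ) :
    (r + 1) * C n (r + 1) = (n - r) * C n r := by
  have hm := C_mul (by omega : (0:ℤ) ≤ n) (r + 1)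
  have hb := C_absorb hn r
  rw [show r + 1 - 1 = r by ring] at hm
  linear_combination hm - hb

theorem stmt_9 (k : ℤ) (hk : 1 ≤ k) :
    A (k + 1) 1 0 = (k + 1) * (2 * A k 0 0 - A k 0 1) ∧
    ∀ r : ℤ, 1 ≤ r → A (k + 1) 1 r = (k + 1) * (A k 0 r - A k 0 (r + 1)) := by
  constructor
  · have e1 : A (k + 1) 1 0 = C (2 * k) k := by
      unfold A
      rw [show (1:ℤ) + 0 - 1 = 0 by ring, show (0:ℤ) - 1 = -1 by ring,
        show 2 * (k + 1) - 1 - 1 = 2 * k by ring,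
        show k + 1 - 1 - 0 - 1 = k - 1 by ring,
        show (1:ℤ) + 0 = 1 by ring, show k + 1 - 1 - 0 = k by ring,
        C_neg (by norm_num), C_zero (by norm_num)]
      ring
    have e2 : A k 0 0 = C (2 * k - 1) k := by
      unfold A
      rw [show (0:ℤ) + 0 - 1 = -1 by ring, show (0:ℤ) - 1 = -1 by ring,
        show 2 * k - 0 - 1 = 2 * k - 1 by ring,
        show k - 0 - 0 - 1 = k - 1 by ring,
        show (0:ℤ) + 0 = 0 by ring, show k - 0 - 0 = k by ring,
        C_neg (by norm_num), C_zero (by omega)]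
      ring
    have e3 : A k 0 1 = C (2 * k - 1) (k - 2) + C (2 * k - 1) (k - 1) := by
      unfold A
      rw [show (0:ℤ) + 1 - 1 = 0 by ring, show (1:ℤ) - 1 = 0 by ring,
        show 2 * k - 0 - 1 = 2 * k - 1 by ring,
        show k - 0 - 1 - 1 = k - 2 by ring,
        show (0:ℤ) + 1 = 1 by ring, show k - 0 - 1 = k - 1 by ring,
        C_zero (by norm_num), C_one (by norm_num)]
      ring
    rw [e1, e2, e3]
    have hs : C (2 * k - 1) k = C (2 * k - 1) (k - 1) := by
      rw [C_symm (by omega) k, show 2 * k - 1 - k = k - 1 by ring]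
    have hp := C_pascal (by omega : (1:ℤ) ≤ 2 * k) k
    have ha := C_succ_absorb (by omega : (1:ℤ) ≤ 2 * k - 1) (k - 2)
    rw [show k - 2 + 1 = k - 1 by ring, show 2 * k - 1 - (k - 2) = k + 1 by ring] at ha
    linear_combination hp - (2 * k + 1) * hs - ha
  · intro r hr
    have e1 : A (k + 1) 1 r = r * C (2 * k) (k - r - 1) + (r + 1) * C (2 * k) (k - r) := by
      unfold A
      rw [show (1:ℤ) + r - 1 = r by ring,
        show 2 * (k + 1) - 1 - 1 = 2 * k by ring,
        show k + 1 - 1 - r - 1 = k - r - 1 by ring,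
        show k + 1 - 1 - r = k - r by ring]
      have h1 : C r (r - 1) = r := by
        rw [C_symm (by omega) (r - 1), show r - (r - 1) = 1 by ring, C_one (by omega)]
      have h2 : C (1 + r) r = r + 1 := by
        rw [C_symm (by omega) r, show 1 + r - r = 1 by ring, C_one (by omega)]
        ring
      rw [h1, h2]
    have e2 : A k 0 r = C (2 * k - 1) (k - r - 1) + C (2 * k - 1) (k - r) := by
      unfold A
      rw [show (0:ℤ) + r - 1 = r - 1 by ring, show 2 * k - 0 - 1 = 2 * k - 1 by ring,
        show k - 0 - r - 1 = k - r - 1 by ring, show (0:ℤ) + r = r by ring,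
        show k - 0 - r = k - r by ring,
        C_self (by omega : (0:ℤ) ≤ r - 1), C_self (by omega : (0:ℤ) ≤ r)]
      ring
    have e3 : A k 0 (r + 1) = C (2 * k - 1) (k - r - 2) + C (2 * k - 1) (k - r - 1) := by
      unfold A
      rw [show (0:ℤ) + (r + 1) - 1 = r by ring, show r + 1 - 1 = r by ring,
        show 2 * k - 0 - 1 = 2 * k - 1 by ring,
        show k - 0 - (r + 1) - 1 = k - r - 2 by ring, show (0:ℤ) + (r + 1) = r + 1 by ring,
        show k - 0 - (r + 1) = k - r - 1 by ring,
        C_self (by omega : (0:ℤ) ≤ r), C_self (by omega : (0:ℤ) ≤ r + 1)]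
      ring
    rw [e1, e2, e3]
    have hp1 := C_pascal (by omega : (1:ℤ) ≤ 2 * k) (k - r)
    have hp2 := C_pascal (by omega : (1:ℤ) ≤ 2 * k) (k - r - 1)
    rw [show k - r - 1 - 1 = k - r - 2 by ring] at hp2
    have hm1 := C_mul (by omega : (0:ℤ) ≤ 2 * k - 1) (k - r)
    rw [show 2 * k - 1 - 1 = 2 * k - 2 by ring] at hm1
    have hm2 := C_mul (by omega : (0:ℤ) ≤ 2 * k - 1) (k - r - 1)
    rw [show 2 * k - 1 - 1 = 2 * k - 2 by ring, show k - r - 1 - 1 = k - r - 2 by ring] at hm2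
    have hb1 := C_absorb (by omega : (1:ℤ) ≤ 2 * k - 1) (k - r - 1)
    rw [show 2 * k - 1 - 1 = 2 * k - 2 by ring, show 2 * k - 1 - (k - r - 1) = k + r by ring] at hb1
    have hb2 := C_absorb (by omega : (1:ℤ) ≤ 2 * k - 1) (k - r - 2)
    rw [show 2 * k - 1 - 1 = 2 * k - 2 by ring, show 2 * k - 1 - (k - r - 2) = k + r + 1 by ring] at hb2
    linear_combination r * hp2 + (r + 1) * hp1 - hm1 + hb1 - hm2 + hb2
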